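/- Let N ≥ 2 be an integer, let c > 0 with p := c·ln N / N ≤ 1/2, let δ > 0, set A_δ := (1−ε)(1−e^{−2cδ})/2 and a := c(1−ε)(1−cδ), and let ε be a real number with 0 < ε ≤ A_δ/2 and e·ε·N^{1−a} ≤ 1. Then there exists an N×N matrix A over 𝔽₂ with at most 2cN·ln N nonzero entries such that, for G = [I | A] (the N×(2N) matrix whose first N columns form the identity and whose last N columns are the columns of A) and a random erasure pattern S ⊆ {1,…,2N} with each coordinate included independently with probability ε, the probability that there exists x ∈ 𝔽₂^N, x ≠ 0, confused with the zero vector under S is at most 2·[(1 − A_δ/2)^N + δ·e·ε·N^{2−a} / ln N]. -/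

import Mathlib

set_option maxHeartbeats 2000000


open scoped Classical

/-- `x₁` is *confused with* `x₂` under the erasure pattern `S`: the codewords
`x₁ᵀG` and `x₂ᵀG` agree on every coordinate outside `S`. -/
def Confused {n m : Type*} [Fintype n] (G : Matrix n m (ZMod 2))
    (x₁ x₂ : n → ZMod 2) (S : Finset m) : Prop :=
  ∀ j, j ∉ S → Matrix.vecMul x₁ G j = Matrix.vecMul x₂ G j

/-- Probability of an event `E` of erasure patterns when each coordinate is
erased independently with probability `ε`. -/
noncomputable def erasureProb {m : Type*} [Fintype m] (ε : ℝ)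
    (E : Finset m → Prop) : ℝ :=
  ∑ S : Finset m,
    if E S then ε ^ S.card * (1 - ε) ^ (Fintype.card m - S.card) else 0

namespace Stmt16Aux

open Finset

lemma binom_one {m : Type*} [DecidableEq m] (ε : ℝ) (V : Finset m) :
    ∑ U ∈ V.powerset, ε ^ U.card * (1 - ε) ^ (V.card - U.card) = 1 := by
  have h := Finset.prod_add (fun _ : m => ε) (fun _ => (1 - ε)) V
  simp only [Finset.prod_const] at h
  have : ∀ U ∈ V.powerset, ε ^ U.card * (1 - ε) ^ (V.card - U.card)
      = ε ^ U.card * (1 - ε) ^ (V \ U).card := by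
    intro U hU
    rw [Finset.card_sdiff_of_subset (Finset.mem_powerset.1 hU)]
  rw [Finset.sum_congr rfl this]
  rw [← h]
  norm_num

lemma prob_superset {m : Type*} [Fintype m] (ε : ℝ) (T : Finset m) :
    ∑ S : Finset m, (if T ⊆ S then ε ^ S.card * (1 - ε) ^ (Fintype.card m - S.card) else 0)
      = ε ^ T.card := by
  classical
  rw [← Finset.sum_filter]
  rw [show (univ.filter (fun S => T ⊆ S)) = (Finset.image (fun U => U ∪ T) Tᶜ.powerset) from ?_]
  · rw [Finset.sum_image ?inj]
    case inj =>
      intro U hU V hV h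
      have : ∀ W ∈ Tᶜ.powerset, (W ∪ T) \ T = W := by
        intro W hW
        rw [Finset.union_sdiff_right, Finset.sdiff_eq_self_iff_disjoint]
        exact Finset.disjoint_right.2 fun a haT haW =>
          (Finset.mem_compl.1 (Finset.mem_powerset.1 hW haW)) haT
      rw [← this U hU, ← this V hV, show U ∪ T = V ∪ T from h]
    have key : ∀ U ∈ Tᶜ.powerset, ε ^ (U ∪ T).card * (1 - ε) ^ (Fintype.card m - (U ∪ T).card)
        = ε ^ T.card * (ε ^ U.card * (1 - ε) ^ (Tᶜ.card - U.card)) := by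
      intro U hU
      have hdisj : Disjoint U T := Finset.disjoint_right.2 fun a haT haU =>
        (Finset.mem_compl.1 (Finset.mem_powerset.1 hU haU)) haT
      have hcard : (U ∪ T).card = U.card + T.card := Finset.card_union_of_disjoint hdisj
      have h1 : Tᶜ.card = Fintype.card m - T.card := by
        rw [Finset.card_compl]
      have hU' : U.card ≤ Tᶜ.card := Finset.card_le_card (Finset.mem_powerset.1 hU)
      have hT : T.card ≤ Fintype.card m := Finset.card_le_univ T
      rw [hcard, pow_add, h1]
      have he : Fintype.card m - (U.card + T.card) = (Fintype.card m - T.card) - U.card := by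
        omega
      rw [he]
      ring
    rw [Finset.sum_congr rfl key, ← Finset.mul_sum, binom_one, mul_one]
  · ext S
    simp only [Finset.mem_filter, Finset.mem_univ, true_and, Finset.mem_image,
      Finset.mem_powerset]
    constructor
    · intro hTS
      exact ⟨S \ T, fun a ha => Finset.mem_compl.2 (Finset.mem_sdiff.1 ha).2,
        by rw [Finset.sdiff_union_of_subset hTS]⟩
    · rintro ⟨U, hU, rfl⟩
      exact Finset.subset_union_right

lemma sum_prod_fun {α β : Type*} [Fintype α] [Fintype β] [DecidableEq α] (F : α → β → ℝ) :
    ∑ f : α → β, ∏ a, F a (f a) = ∏ a, ∑ b, F a b := by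
  rw [Finset.prod_univ_sum, Fintype.piFinset_univ]

lemma zmod2_cases (v : ZMod 2) : v = 0 ∨ v = 1 := by
  fin_cases v
  · exact Or.inl rfl
  · exact Or.inr rfl

lemma zval0 : ((0:ZMod 2)).val = 0 := rfl
lemma zval1 : ((1:ZMod 2)).val = 1 := rfl
lemma zadd11 : (1+1 : ZMod 2) = 0 := by decide

lemma parity_prod {ι : Type*} [DecidableEq ι] (s : Finset ι) (g : ι → ZMod 2) :
    ∏ i ∈ s, (1 - 2 * ((g i).val : ℝ)) = 1 - 2 * (((∑ i ∈ s, g i).val : ℝ)) := by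
  induction s using Finset.induction with
  | empty => simp
  | @insert a s ha ih =>
    rw [Finset.prod_insert ha, Finset.sum_insert ha, ih]
    rcases zmod2_cases (g a) with h | h <;> rcases zmod2_cases (∑ i ∈ s, g i) with h' | h' <;>
      rw [h, h'] <;> simp [zval0, zval1, zadd11] <;> ring

lemma ind_eq (ε : ℝ) (v : ZMod 2) :
    (if v = 0 then (1:ℝ) else ε) = (1+ε)/2 + (1-ε)/2 * (1 - 2 * ((v.val : ℕ) : ℝ)) := by
  rcases zmod2_cases v with h | h <;> subst h <;>
    norm_num [zval0, zval1] <;> ring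

lemma sum_w (p : ℝ) : ∑ b : ZMod 2, (if b = 1 then p else 1-p) = 1 := by
  rw [show (univ : Finset (ZMod 2)) = {0, 1} from rfl]
  norm_num

lemma sum_w_sign (p : ℝ) :
    ∑ b : ZMod 2, (if b = 1 then p else 1-p) * (1 - 2 * ((b.val : ℕ) : ℝ)) = 1 - 2*p := by
  rw [show (univ : Finset (ZMod 2)) = {0, 1} from rfl,
    Finset.sum_insert (by decide), Finset.sum_singleton,
    if_neg (by decide : ¬ (0 : ZMod 2) = 1), if_pos rfl, zval0, zval1]
  push_cast
  ring

lemma colE (N : ℕ) (p ε : ℝ) (x : Fin N → ZMod 2) :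
    ∑ g : Fin N → ZMod 2,
        (∏ i, (if g i = 1 then p else 1-p)) * (if (∑ i, x i * g i) = 0 then (1:ℝ) else ε)
      = (1+ε)/2 + (1-ε)/2 * (1-2*p) ^ (univ.filter (fun i => x i ≠ 0)).card := by
  have hip : ∀ g : Fin N → ZMod 2, ∑ i, x i * g i = ∑ i ∈ univ.filter (fun i => x i ≠ 0), g i := by
    intro g
    rw [Finset.sum_filter]
    refine Finset.sum_congr rfl fun i _ => ?_
    rcases zmod2_cases (x i) with h | h <;> simp [h]
  have step1 : ∀ g : Fin N → ZMod 2,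
      (∏ i, (if g i = 1 then p else 1-p)) * (if (∑ i, x i * g i) = 0 then (1:ℝ) else ε)
      = (1+ε)/2 * (∏ i, (if g i = 1 then p else 1-p))
        + (1-ε)/2 * ∏ i, ((if g i = 1 then p else 1-p)
            * (if x i ≠ 0 then (1 - 2 * ((g i).val : ℝ)) else 1)) := by
    intro g
    rw [hip g, ind_eq ε, ← parity_prod, Finset.prod_filter, Finset.prod_mul_distrib]
    ring
  rw [Finset.sum_congr rfl fun g _ => step1 g, Finset.sum_add_distrib, ← Finset.mul_sum,
    ← Finset.mul_sum]
  rw [sum_prod_fun (fun (i : Fin N) (b : ZMod 2) => if b = 1 then p else 1-p)]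
  rw [sum_prod_fun (fun (i : Fin N) (b : ZMod 2) =>
    (if b = 1 then p else 1-p) * (if x i ≠ 0 then (1 - 2 * ((b.val : ℕ) : ℝ)) else 1))]
  have h1 : ∏ i : Fin N, ∑ b : ZMod 2, (if b = 1 then p else 1-p) = 1 := by
    simp [sum_w]
  have h2 : ∏ i : Fin N, (∑ b : ZMod 2, (if b = 1 then p else 1-p)
        * (if x i ≠ 0 then (1 - 2 * ((b.val : ℕ) : ℝ)) else 1))
      = (1-2*p) ^ (univ.filter (fun i => x i ≠ 0)).card := by
    rw [← Finset.prod_filter_mul_prod_filter_not univ (fun i => x i ≠ 0)]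
    have ha : ∀ i ∈ univ.filter (fun i => x i ≠ 0),
        (∑ b : ZMod 2, (if b = 1 then p else 1-p)
          * (if x i ≠ 0 then (1 - 2 * ((b.val : ℕ) : ℝ)) else 1)) = 1 - 2*p := by
      intro i hi
      simp only [Finset.mem_filter] at hi
      simp only [if_pos hi.2]
      exact sum_w_sign p
    have hb : ∀ i ∈ univ.filter (fun i => ¬ x i ≠ 0),
        (∑ b : ZMod 2, (if b = 1 then p else 1-p)
          * (if x i ≠ 0 then (1 - 2 * ((b.val : ℕ) : ℝ)) else 1)) = 1 := by
      intro i hi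
      simp only [Finset.mem_filter] at hi
      simp only [if_neg hi.2, mul_one]
      exact sum_w p
    rw [Finset.prod_congr rfl ha, Finset.prod_congr rfl hb, Finset.prod_const,
      Finset.prod_const, one_pow, mul_one]
  rw [h1, h2, mul_one]

lemma pow_wt {N : ℕ} (ε : ℝ) (v : Fin N → ZMod 2) :
    ε ^ (univ.filter (fun j => v j ≠ 0)).card = ∏ j, (if v j = 0 then (1:ℝ) else ε) := by
  rw [Finset.prod_ite (f := fun _ => (1:ℝ)) (g := fun _ => ε), Finset.prod_const,
    Finset.prod_const, one_pow, one_mul]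

lemma matE (N : ℕ) (p ε : ℝ) (x : Fin N → ZMod 2) :
    ∑ A : Matrix (Fin N) (Fin N) (ZMod 2),
      (∏ i, ∏ j, (if A i j = 1 then p else 1-p)) *
        ε ^ (univ.filter (fun j => Matrix.vecMul x A j ≠ 0)).card
      = ((1+ε)/2 + (1-ε)/2 * (1-2*p) ^ (univ.filter (fun i => x i ≠ 0)).card) ^ N := by
  classical
  let e : (Fin N → Fin N → ZMod 2) ≃ Matrix (Fin N) (Fin N) (ZMod 2) :=
    ⟨fun B => Matrix.of fun i j => B j i, fun A j i => A i j, fun _ => rfl, fun _ => rfl⟩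
  rw [← Equiv.sum_comp e]
  have step : ∀ B : Fin N → Fin N → ZMod 2,
      (∏ i, ∏ j, (if (e B) i j = 1 then p else 1-p)) *
        ε ^ (univ.filter (fun j => Matrix.vecMul x (e B) j ≠ 0)).card
      = ∏ j, ((∏ i, (if B j i = 1 then p else 1-p))
          * (if (∑ i, x i * B j i) = 0 then (1:ℝ) else ε)) := by
    intro B
    have h1 : (∏ i, ∏ j, (if (e B) i j = 1 then p else 1-p))
        = ∏ j, ∏ i, (if B j i = 1 then p else 1-p) := Finset.prod_comm
    have h2 : ∀ j, Matrix.vecMul x (e B) j = ∑ i, x i * B j i := by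
      intro j
      simp [Matrix.vecMul, dotProduct, e]
      rfl
    rw [h1, pow_wt, Finset.prod_mul_distrib]
    simp only [h2]
  rw [Finset.sum_congr rfl fun B _ => step B]
  rw [sum_prod_fun (fun (j : Fin N) (g : Fin N → ZMod 2) =>
    (∏ i, (if g i = 1 then p else 1-p)) * (if (∑ i, x i * g i) = 0 then (1:ℝ) else ε))]
  rw [Finset.prod_congr rfl fun j _ => colE N p ε x, Finset.prod_const, Finset.card_univ,
    Fintype.card_fin]

lemma quad_exp {t : ℝ} (ht : 0 ≤ t) : t - t^2/2 ≤ 1 - Real.exp (-t) := by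
  have hpos : (0:ℝ) < 1 + t + t^2/2 := by positivity
  have h3 : 1 + t + t^2/2 ≤ Real.exp t := by
    have h := Real.sum_le_exp_of_nonneg ht 3
    simp [Finset.sum_range_succ, Nat.factorial] at h
    linarith
  have h4 : Real.exp (-t) ≤ 1/(1+t+t^2/2) := by
    rw [Real.exp_neg, inv_eq_one_div]
    exact one_div_le_one_div_of_le hpos h3
  have h5 : 1/(1+t+t^2/2) ≤ 1 - t + t^2/2 := by
    rw [div_le_iff₀ hpos]
    nlinarith [sq_nonneg t, sq_nonneg (t^2)]
  linarith

lemma sumW_one {α : Type*} [Fintype α] [DecidableEq α] (p : ℝ) :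
    ∑ h : α → ZMod 2, ∏ q, (if h q = 1 then p else 1-p) = 1 := by
  rw [sum_prod_fun (fun (q : α) (b : ZMod 2) => if b = 1 then p else 1-p)]
  simp [sum_w]

lemma entryE {α : Type*} [Fintype α] [DecidableEq α] (p : ℝ) (q : α) :
    ∑ h : α → ZMod 2,
        (∏ q', (if h q' = 1 then p else 1-p)) * (if h q ≠ 0 then (1:ℝ) else 0) = p := by
  have merge : ∀ h : α → ZMod 2,
      (∏ q', (if h q' = 1 then p else 1-p)) * (if h q ≠ 0 then (1:ℝ) else 0)
      = ∏ q', ((if h q' = 1 then p else 1-p)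
          * (if q' = q then (if h q' ≠ 0 then (1:ℝ) else 0) else 1)) := by
    intro h
    rw [Finset.prod_mul_distrib]
    congr 1
    rw [Finset.prod_ite_eq' univ q (fun q' => if h q' ≠ 0 then (1:ℝ) else 0)]
    simp
  rw [Finset.sum_congr rfl fun h _ => merge h, sum_prod_fun (fun (q' : α) (b : ZMod 2) =>
    (if b = 1 then p else 1-p) * (if q' = q then (if b ≠ 0 then (1:ℝ) else 0) else 1))]
  have hcol : ∀ q' : α, (∑ b : ZMod 2, (if b = 1 then p else 1-p)
        * (if q' = q then (if b ≠ 0 then (1:ℝ) else 0) else 1))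
      = if q' = q then p else 1 := by
    intro q'
    by_cases hq : q' = q
    · simp only [if_pos hq]
      rw [show (univ : Finset (ZMod 2)) = {0, 1} from rfl,
        Finset.sum_insert (by decide), Finset.sum_singleton]
      norm_num
    · simp only [if_neg hq, mul_one]
      exact sum_w p
  rw [Finset.prod_congr rfl fun q' _ => hcol q', Finset.prod_ite_eq' univ q (fun _ => p)]
  simp

lemma sumW_mat (N : ℕ) (p : ℝ) :
    ∑ A : Matrix (Fin N) (Fin N) (ZMod 2), ∏ i, ∏ j, (if A i j = 1 then p else 1-p) = 1 := by
  classical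
  let e : (Fin N × Fin N → ZMod 2) ≃ Matrix (Fin N) (Fin N) (ZMod 2) :=
    ⟨fun h => Matrix.of fun i j => h (i,j), fun A q => A q.1 q.2,
     fun h => funext fun q => rfl, fun A => rfl⟩
  rw [← Equiv.sum_comp e]
  have key : ∀ h : Fin N × Fin N → ZMod 2,
      (∏ i, ∏ j, (if (e h) i j = 1 then p else 1-p)) = ∏ q, (if h q = 1 then p else 1-p) :=
    fun h => (Fintype.prod_prod_type (fun q : Fin N × Fin N => if h q = 1 then p else 1-p)).symm
  rw [Finset.sum_congr rfl fun h _ => key h]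
  exact sumW_one p

lemma onesE_mat (N : ℕ) (p : ℝ) :
    ∑ A : Matrix (Fin N) (Fin N) (ZMod 2),
      (∏ i, ∏ j, (if A i j = 1 then p else 1-p)) *
        ((univ.filter (fun ij : Fin N × Fin N => A ij.1 ij.2 ≠ 0)).card : ℝ)
      = p * (N:ℝ)^2 := by
  classical
  let e : (Fin N × Fin N → ZMod 2) ≃ Matrix (Fin N) (Fin N) (ZMod 2) :=
    ⟨fun h => Matrix.of fun i j => h (i,j), fun A q => A q.1 q.2,
     fun h => funext fun q => rfl, fun A => rfl⟩
  rw [← Equiv.sum_comp e]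
  have key : ∀ h : Fin N × Fin N → ZMod 2,
      (∏ i, ∏ j, (if (e h) i j = 1 then p else 1-p)) *
          ((univ.filter (fun ij : Fin N × Fin N => (e h) ij.1 ij.2 ≠ 0)).card : ℝ)
        = ∑ q : Fin N × Fin N,
            (∏ q', (if h q' = 1 then p else 1-p)) * (if h q ≠ 0 then (1:ℝ) else 0) := by
    intro h
    have h1 : (∏ i, ∏ j, (if (e h) i j = 1 then p else 1-p))
        = ∏ q, (if h q = 1 then p else 1-p) :=
      (Fintype.prod_prod_type (fun q : Fin N × Fin N => if h q = 1 then p else 1-p)).symm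
    have h2 : ((univ.filter (fun ij : Fin N × Fin N => (e h) ij.1 ij.2 ≠ 0)).card : ℝ)
        = ∑ q : Fin N × Fin N, (if h q ≠ 0 then (1:ℝ) else 0) := by
      have : (univ.filter (fun ij : Fin N × Fin N => (e h) ij.1 ij.2 ≠ 0))
          = (univ.filter (fun q : Fin N × Fin N => h q ≠ 0)) := rfl
      rw [this, Finset.card_filter]
      push_cast
      rfl
    rw [h1, h2, Finset.mul_sum]
  rw [Finset.sum_congr rfl fun h _ => key h, Finset.sum_comm]
  rw [Finset.sum_congr rfl fun q _ => entryE p q, Finset.sum_const, Finset.card_univ]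
  simp [Fintype.card_prod, Fintype.card_fin]
  ring

lemma erasureProb_def {m : Type*} [Fintype m] (ε : ℝ) (E : Finset m → Prop) :
    erasureProb ε E = ∑ S : Finset m,
      if E S then ε ^ S.card * (1 - ε) ^ (Fintype.card m - S.card) else 0 := rfl

lemma union_bound (N : ℕ) (ε : ℝ) (hε0 : 0 ≤ ε) (hε1 : ε ≤ 1)
    (A : Matrix (Fin N) (Fin N) (ZMod 2)) :
    erasureProb ε (fun S : Finset (Fin N ⊕ Fin N) =>
        ∃ x : Fin N → ZMod 2, x ≠ 0 ∧ Confused (Matrix.fromCols 1 A) x 0 S)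
      ≤ ∑ x ∈ univ.filter (fun x : Fin N → ZMod 2 => x ≠ 0),
          ε ^ (univ.filter (fun i => x i ≠ 0)).card *
            ε ^ (univ.filter (fun j => Matrix.vecMul x A j ≠ 0)).card := by
  classical
  set G := Matrix.fromCols (1 : Matrix (Fin N) (Fin N) (ZMod 2)) A with hG
  have hμ0 : ∀ S : Finset (Fin N ⊕ Fin N),
      (0:ℝ) ≤ ε ^ S.card * (1-ε) ^ (Fintype.card (Fin N ⊕ Fin N) - S.card) := fun S =>
    mul_nonneg (pow_nonneg hε0 _) (pow_nonneg (by linarith) _)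
  set T : (Fin N → ZMod 2) → Finset (Fin N ⊕ Fin N) :=
    fun x => univ.filter (fun j => Matrix.vecMul x G j ≠ 0) with hT
  have hconf : ∀ x S, Confused G x 0 S ↔ T x ⊆ S := by
    intro x S
    constructor
    · intro h j hj
      simp only [hT, Finset.mem_filter, Finset.mem_univ, true_and] at hj
      by_contra hjS
      apply hj
      rw [h j hjS, Matrix.zero_vecMul]
      rfl
    · intro h j hjS
      rw [Matrix.zero_vecMul]
      show Matrix.vecMul x G j = 0
      by_contra hne
      exact hjS (h (Finset.mem_filter.2 ⟨Finset.mem_univ _, hne⟩))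
  have hcard : ∀ x : Fin N → ZMod 2, (T x).card
      = (univ.filter (fun i => x i ≠ 0)).card
        + (univ.filter (fun j => Matrix.vecMul x A j ≠ 0)).card := by
    intro x
    have hTx : T x = (univ.filter (fun i => x i ≠ 0)).disjSum
        (univ.filter (fun j => Matrix.vecMul x A j ≠ 0)) := by
      ext j
      cases j with
      | inl i => simp [hT, hG, Matrix.vecMul_fromCols, Matrix.vecMul_one]
      | inr j => simp [hT, hG, Matrix.vecMul_fromCols]
    rw [hTx, Finset.card_disjSum]
  rw [erasureProb_def]
  have h2 : ∑ S : Finset (Fin N ⊕ Fin N), ∑ x ∈ univ.filter (fun x : Fin N → ZMod 2 => x ≠ 0),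
        (if Confused G x 0 S
          then ε ^ S.card * (1-ε) ^ (Fintype.card (Fin N ⊕ Fin N) - S.card) else 0)
      ≤ ∑ x ∈ univ.filter (fun x : Fin N → ZMod 2 => x ≠ 0),
          ε ^ (univ.filter (fun i => x i ≠ 0)).card *
            ε ^ (univ.filter (fun j => Matrix.vecMul x A j ≠ 0)).card := by
    rw [Finset.sum_comm]
    apply Finset.sum_le_sum
    intro x _
    have hrw : (∑ S : Finset (Fin N ⊕ Fin N),
        (if Confused G x 0 S
          then ε ^ S.card * (1-ε) ^ (Fintype.card (Fin N ⊕ Fin N) - S.card) else 0))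
        = ε ^ (T x).card := by
      rw [← prob_superset ε (T x)]
      apply Finset.sum_congr rfl
      intro S _
      by_cases hC : Confused G x 0 S
      · rw [if_pos hC, if_pos ((hconf x S).1 hC)]
      · rw [if_neg hC, if_neg (fun h => hC ((hconf x S).2 h))]
    rw [hrw, hcard x, pow_add]
  refine le_trans (Finset.sum_le_sum (fun S _ => ?_)) h2
  · have hnn : ∀ x : Fin N → ZMod 2, (0:ℝ) ≤
        (if Confused G x 0 S
          then ε ^ S.card * (1-ε) ^ (Fintype.card (Fin N ⊕ Fin N) - S.card) else 0) := by
      intro x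
      split
      · exact hμ0 S
      · exact le_refl 0
    by_cases hE : (∃ x : Fin N → ZMod 2, x ≠ 0 ∧ Confused G x 0 S)
    · rw [if_pos hE]
      obtain ⟨x₀, hx0, hcf⟩ := hE
      have hmem : x₀ ∈ univ.filter (fun x : Fin N → ZMod 2 => x ≠ 0) :=
        Finset.mem_filter.2 ⟨Finset.mem_univ _, hx0⟩
      have hs := Finset.single_le_sum
        (f := fun x : Fin N → ZMod 2 => (if Confused G x 0 S
          then ε ^ S.card * (1-ε) ^ (Fintype.card (Fin N ⊕ Fin N) - S.card) else 0))
        (fun x _ => hnn x) hmem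
      simp only [if_pos hcf] at hs
      exact hs
    · rw [if_neg hE]
      exact Finset.sum_nonneg fun x _ => hnn x

lemma sum_nz (N : ℕ) (p ε : ℝ) :
    ∑ A : Matrix (Fin N) (Fin N) (ZMod 2), (∏ i, ∏ j, (if A i j = 1 then p else 1-p)) *
        (∑ x ∈ univ.filter (fun x : Fin N → ZMod 2 => x ≠ 0),
          ε ^ (univ.filter (fun i => x i ≠ 0)).card *
            ε ^ (univ.filter (fun j => Matrix.vecMul x A j ≠ 0)).card)
      = ∑ x ∈ univ.filter (fun x : Fin N → ZMod 2 => x ≠ 0),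
          ε ^ (univ.filter (fun i => x i ≠ 0)).card *
            ((1+ε)/2 + (1-ε)/2 * (1-2*p) ^ (univ.filter (fun i => x i ≠ 0)).card) ^ N := by
  classical
  have h1 : ∀ A : Matrix (Fin N) (Fin N) (ZMod 2),
      (∏ i, ∏ j, (if A i j = 1 then p else 1-p)) *
        (∑ x ∈ univ.filter (fun x : Fin N → ZMod 2 => x ≠ 0),
          ε ^ (univ.filter (fun i => x i ≠ 0)).card *
            ε ^ (univ.filter (fun j => Matrix.vecMul x A j ≠ 0)).card)
      = ∑ x ∈ univ.filter (fun x : Fin N → ZMod 2 => x ≠ 0),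
          ε ^ (univ.filter (fun i => x i ≠ 0)).card *
            ((∏ i, ∏ j, (if A i j = 1 then p else 1-p)) *
              ε ^ (univ.filter (fun j => Matrix.vecMul x A j ≠ 0)).card) := by
    intro A
    rw [Finset.mul_sum]
    exact Finset.sum_congr rfl fun x _ => by ring
  rw [Finset.sum_congr rfl fun A _ => h1 A, Finset.sum_comm]
  apply Finset.sum_congr rfl
  intro x _
  rw [← Finset.mul_sum, matE N p ε x]

lemma fiber_bound (N : ℕ) (F : ℕ → ℝ) (hF : ∀ w, 0 ≤ F w) :
    ∑ x ∈ univ.filter (fun x : Fin N → ZMod 2 => x ≠ 0),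
        F ((univ.filter (fun i => x i ≠ 0)).card)
      ≤ ∑ w ∈ Finset.Icc 1 N, (N.choose w : ℝ) * F w := by
  classical
  have hmaps : ∀ x ∈ univ.filter (fun x : Fin N → ZMod 2 => x ≠ 0),
      (univ.filter (fun i => x i ≠ 0)).card ∈ Finset.Icc 1 N := by
    intro x hx
    simp only [Finset.mem_filter, Finset.mem_univ, true_and] at hx
    rw [Finset.mem_Icc]
    constructor
    · obtain ⟨i, hi⟩ := Function.ne_iff.1 hx
      exact Finset.card_pos.2 ⟨i, Finset.mem_filter.2 ⟨Finset.mem_univ _, hi⟩⟩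
    · exact (Finset.card_filter_le _ _).trans (by simp)
  rw [← Finset.sum_fiberwise_of_maps_to hmaps
    (fun x => F ((univ.filter (fun i => x i ≠ 0)).card))]
  apply Finset.sum_le_sum
  intro w hw
  have hinner : ∑ x ∈ (univ.filter (fun x : Fin N → ZMod 2 => x ≠ 0)).filter
        (fun x => (univ.filter (fun i => x i ≠ 0)).card = w),
      F ((univ.filter (fun i => x i ≠ 0)).card)
      = ((univ.filter (fun x : Fin N → ZMod 2 => x ≠ 0)).filter
        (fun x => (univ.filter (fun i => x i ≠ 0)).card = w)).card * F w := by
    rw [Finset.sum_congr rfl (fun x hx => by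
      rw [(Finset.mem_filter.1 hx).2])]
    rw [Finset.sum_const, nsmul_eq_mul]
  rw [hinner]
  apply mul_le_mul_of_nonneg_right _ (hF w)
  have hcard : ((univ.filter (fun x : Fin N → ZMod 2 => x ≠ 0)).filter
        (fun x => (univ.filter (fun i => x i ≠ 0)).card = w)).card
      ≤ (Finset.powersetCard w (univ : Finset (Fin N))).card := by
    apply Finset.card_le_card_of_injOn (fun x => univ.filter (fun i => x i ≠ 0))
    · intro x hx
      rw [Finset.mem_coe, Finset.mem_powersetCard]
      exact ⟨Finset.filter_subset _ _ |>.trans (le_refl _), (Finset.mem_filter.1 hx).2⟩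
    · intro x hx y hy hxy
      have hxy' : univ.filter (fun i => x i ≠ 0) = univ.filter (fun i => y i ≠ 0) := hxy
      funext i
      have hiff : (x i ≠ 0) ↔ (y i ≠ 0) := by
        constructor
        · intro h
          have : i ∈ univ.filter (fun i => x i ≠ 0) :=
            Finset.mem_filter.2 ⟨Finset.mem_univ _, h⟩
          rw [hxy'] at this
          exact (Finset.mem_filter.1 this).2
        · intro h
          have : i ∈ univ.filter (fun i => y i ≠ 0) :=
            Finset.mem_filter.2 ⟨Finset.mem_univ _, h⟩
          rw [← hxy'] at this
          exact (Finset.mem_filter.1 this).2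
      rcases zmod2_cases (x i) with h | h <;> rcases zmod2_cases (y i) with h' | h' <;>
        rw [h, h'] <;> first | rfl | (exfalso; revert hiff; rw [h, h']; decide)
  calc (((univ.filter (fun x : Fin N → ZMod 2 => x ≠ 0)).filter
        (fun x => (univ.filter (fun i => x i ≠ 0)).card = w)).card : ℝ)
      ≤ ((Finset.powersetCard w (univ : Finset (Fin N))).card : ℝ) := by exact_mod_cast hcard
    _ = (N.choose w : ℝ) := by
        rw [Finset.card_powersetCard, Finset.card_univ, Fintype.card_fin]

end Stmt16Aux

open Finset Stmt16Aux

/-- **Existence of sparse capacity-achieving rate-1/2 erasure codes (Corollary 6).**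
With `p = c ln N / N ≤ 1/2`, `A_δ = (1−ε)(1−e^{−2cδ})/2`, `a = c(1−ε)(1−cδ)`,
`0 < ε ≤ A_δ/2` and `e ε N^{1−a} ≤ 1`, there is an `N×N` matrix `A` over `𝔽₂`
with at most `2cN ln N` nonzero entries such that the block-error probability
of the systematic code `[I | A]` over a BEC(ε) is at most
`2[(1 − A_δ/2)^N + δ e ε N^{2−a}/ln N]`. -/
theorem stmt16 (N : ℕ) (hN : 2 ≤ N) (c : ℝ) (hc : 0 < c)
    (hp : c * Real.log N / N ≤ 1 / 2) (δ : ℝ) (hδ : 0 < δ)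
    (ε : ℝ) (hε0 : 0 < ε)
    (hεA : ε ≤ ((1 - ε) * (1 - Real.exp (-(2 * c * δ))) / 2) / 2)
    (hεN : Real.exp 1 * ε * (N : ℝ) ^ ((1 : ℝ) - c * (1 - ε) * (1 - c * δ)) ≤ 1) :
    ∃ A : Matrix (Fin N) (Fin N) (ZMod 2),
      ((Finset.univ : Finset (Fin N × Fin N)).filter
          (fun ij => A ij.1 ij.2 ≠ 0)).card ≤ 2 * c * N * Real.log N ∧
      erasureProb ε (fun S : Finset (Fin N ⊕ Fin N) =>
          ∃ x : Fin N → ZMod 2, x ≠ 0 ∧ Confused (Matrix.fromCols 1 A) x 0 S)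
        ≤ 2 * ((1 - ((1 - ε) * (1 - Real.exp (-(2 * c * δ))) / 2) / 2) ^ N
            + δ * Real.exp 1 * ε *
                (N : ℝ) ^ ((2 : ℝ) - c * (1 - ε) * (1 - c * δ)) / Real.log N) := by
  classical
  set p : ℝ := c * Real.log N / N with hpdef
  set Aδ : ℝ := (1 - ε) * (1 - Real.exp (-(2 * c * δ))) / 2 with hAdef
  set a : ℝ := c * (1 - ε) * (1 - c * δ) with hadef
  have hN0 : (0:ℝ) < N := by
    have : (0:ℕ) < N := by omega
    exact_mod_cast this
  have hN2 : (2:ℝ) ≤ N := by exact_mod_cast hN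
  have hN1 : (1:ℝ) < N := by linarith
  have hlog : 0 < Real.log N := Real.log_pos hN1
  have hp0 : 0 < p := div_pos (mul_pos hc hlog) hN0
  have hE0 : 0 < Real.exp (-(2 * c * δ)) := Real.exp_pos _
  have hE1 : Real.exp (-(2 * c * δ)) < 1 := by
    rw [Real.exp_lt_one_iff]
    nlinarith
  have hε1 : ε < 1 := by nlinarith
  have hεle1 : ε ≤ 1 := hε1.le
  have hAδ0 : 0 < Aδ := by rw [hAdef]; nlinarith
  have hAδ12 : Aδ < 1/2 := by rw [hAdef]; nlinarith
  have hεA' : ε ≤ Aδ/2 := hεA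
  have hp12 : p ≤ 1/2 := hp
  -- weights
  set W : Matrix (Fin N) (Fin N) (ZMod 2) → ℝ :=
    fun A => ∏ i, ∏ j, (if A i j = 1 then p else 1-p) with hWdef
  have hw0 : ∀ b : ZMod 2, 0 ≤ (if b = 1 then p else 1-p) := by
    intro b; split <;> linarith
  have hW0 : ∀ A, 0 ≤ W A := fun A =>
    Finset.prod_nonneg fun i _ => Finset.prod_nonneg fun j _ => hw0 _
  have hWsum : ∑ A : Matrix (Fin N) (Fin N) (ZMod 2), W A = 1 := sumW_mat N p
  set B : ℝ := (1 - Aδ/2) ^ N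
      + δ * Real.exp 1 * ε * (N : ℝ) ^ ((2 : ℝ) - a) / Real.log N with hBdef
  have hB0 : 0 < B := by
    rw [hBdef]
    have h1 : 0 < (1 - Aδ/2) ^ N := pow_pos (by linarith) N
    have h2 : 0 ≤ δ * Real.exp 1 * ε * (N : ℝ) ^ ((2 : ℝ) - a) / Real.log N := by
      apply div_nonneg _ hlog.le
      have := Real.rpow_nonneg hN0.le ((2:ℝ) - a)
      positivity
    linarith
  set eP : Matrix (Fin N) (Fin N) (ZMod 2) → ℝ := fun A => erasureProb ε
    (fun S : Finset (Fin N ⊕ Fin N) =>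
      ∃ x : Fin N → ZMod 2, x ≠ 0 ∧ Confused (Matrix.fromCols 1 A) x 0 S) with hePdef
  -- expected error bound
  have hEB : ∑ A : Matrix (Fin N) (Fin N) (ZMod 2), W A * eP A ≤ B := by
    have h2p : (0:ℝ) ≤ 1 - 2*p := by linarith
    have hcolv0 : ∀ w : ℕ, (0:ℝ) ≤ (1+ε)/2 + (1-ε)/2*(1-2*p)^w := fun w =>
      add_nonneg (by linarith) (mul_nonneg (by linarith) (pow_nonneg h2p w))
    set F : ℕ → ℝ := fun w => ε^w * ((1+ε)/2 + (1-ε)/2*(1-2*p)^w)^N with hFdef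
    have hF : ∀ w, 0 ≤ F w := fun w =>
      mul_nonneg (pow_nonneg hε0.le w) (pow_nonneg (hcolv0 w) N)
    have hX0 : (0:ℝ) ≤ Real.exp 1 * ε * (N:ℝ)^((1:ℝ)-a) := by positivity
    have stepA : ∑ A : Matrix (Fin N) (Fin N) (ZMod 2), W A * eP A
        ≤ ∑ A : Matrix (Fin N) (Fin N) (ZMod 2), W A *
            (∑ x ∈ univ.filter (fun x : Fin N → ZMod 2 => x ≠ 0),
              ε ^ (univ.filter (fun i => x i ≠ 0)).card *
                ε ^ (univ.filter (fun j => Matrix.vecMul x A j ≠ 0)).card) :=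
      Finset.sum_le_sum fun A _ =>
        mul_le_mul_of_nonneg_left (union_bound N ε hε0.le hεle1 A) (hW0 A)
    have stepB : ∑ A : Matrix (Fin N) (Fin N) (ZMod 2), W A *
            (∑ x ∈ univ.filter (fun x : Fin N → ZMod 2 => x ≠ 0),
              ε ^ (univ.filter (fun i => x i ≠ 0)).card *
                ε ^ (univ.filter (fun j => Matrix.vecMul x A j ≠ 0)).card)
        = ∑ x ∈ univ.filter (fun x : Fin N → ZMod 2 => x ≠ 0),
            ε ^ (univ.filter (fun i => x i ≠ 0)).card *
              ((1+ε)/2 + (1-ε)/2 * (1-2*p) ^ (univ.filter (fun i => x i ≠ 0)).card) ^ N :=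
      sum_nz N p ε
    have stepC : ∑ x ∈ univ.filter (fun x : Fin N → ZMod 2 => x ≠ 0),
            ε ^ (univ.filter (fun i => x i ≠ 0)).card *
              ((1+ε)/2 + (1-ε)/2 * (1-2*p) ^ (univ.filter (fun i => x i ≠ 0)).card) ^ N
        ≤ ∑ w ∈ Finset.Icc 1 N, (N.choose w : ℝ) * F w := fiber_bound N F hF
    have step1 : ∑ A : Matrix (Fin N) (Fin N) (ZMod 2), W A * eP A
        ≤ ∑ w ∈ Finset.Icc 1 N, (N.choose w : ℝ) * F w :=
      stepA.trans (stepB ▸ stepC)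
    refine step1.trans ?_
    have hsplit2 := Finset.sum_filter_add_sum_filter_not (Finset.Icc 1 N)
      (fun w => ((w:ℕ):ℝ) < δ * N / Real.log N) (fun w => (N.choose w : ℝ) * F w)
    have hsmall : ∑ w ∈ (Finset.Icc 1 N).filter (fun w => ((w:ℕ):ℝ) < δ * N / Real.log N),
        (N.choose w : ℝ) * F w
        ≤ δ * Real.exp 1 * ε * (N:ℝ)^((2:ℝ)-a) / Real.log N := by
      have hterm : ∀ w ∈ (Finset.Icc 1 N).filter (fun w => ((w:ℕ):ℝ) < δ * N / Real.log N),
          (N.choose w : ℝ) * F w ≤ Real.exp 1 * ε * (N:ℝ)^((1:ℝ)-a) := by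
        intro w hw
        obtain ⟨hwIcc, hwL⟩ := Finset.mem_filter.1 hw
        obtain ⟨hw1, hwN⟩ := Finset.mem_Icc.1 hwIcc
        have hw1R : (1:ℝ) ≤ (w:ℝ) := by exact_mod_cast hw1
        have hpw : p * (w:ℝ) ≤ c * δ := by
          have h := mul_le_mul_of_nonneg_left hwL.le hp0.le
          have hpL : p * (δ*(N:ℝ)/Real.log N) = c*δ := by
            rw [hpdef]; field_simp
          linarith
        have hpw0 : (0:ℝ) ≤ p * (w:ℝ) := by positivity
        have h1 : (1-2*p)^w ≤ Real.exp (-(2*(p*(w:ℝ)))) := by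
          calc (1-2*p)^w ≤ (Real.exp (-(2*p)))^w :=
                pow_le_pow_left₀ h2p
                  (by have := Real.add_one_le_exp (-(2*p)); linarith) w
            _ = Real.exp ((w:ℝ) * (-(2*p))) := (Real.exp_nat_mul _ w).symm
            _ = Real.exp (-(2*(p*(w:ℝ)))) := by congr 1; ring
        have h2 : 2*(p*(w:ℝ)) - (2*(p*(w:ℝ)))^2/2 ≤ 1 - Real.exp (-(2*(p*(w:ℝ)))) :=
          quad_exp (by positivity)
        have hq : (1-ε)*(p*(w:ℝ))*(1-c*δ) ≤ (1-ε)*((1-(1-2*p)^w)/2) := by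
          nlinarith [h1, h2, mul_nonneg hpw0 (sub_nonneg.2 hpw), hε1,
            mul_nonneg (show (0:ℝ) ≤ 1-ε by linarith) (mul_nonneg hpw0 (sub_nonneg.2 hpw))]
        have hcolv_le : (1+ε)/2 + (1-ε)/2*(1-2*p)^w
            ≤ Real.exp (-((1-ε)*(p*(w:ℝ))*(1-c*δ))) := by
          have hexp := Real.add_one_le_exp (-((1-ε)*(p*(w:ℝ))*(1-c*δ)))
          nlinarith [hq]
        have hcolvN : ((1+ε)/2 + (1-ε)/2*(1-2*p)^w)^N ≤ (N:ℝ)^(-(a*(w:ℝ))) := by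
          have hmono : ((1+ε)/2 + (1-ε)/2*(1-2*p)^w)^N
              ≤ (Real.exp (-((1-ε)*(p*(w:ℝ))*(1-c*δ))))^N :=
            pow_le_pow_left₀ (hcolv0 w) hcolv_le N
          have heq : (Real.exp (-((1-ε)*(p*(w:ℝ))*(1-c*δ))))^N = (N:ℝ)^(-(a*(w:ℝ))) := by
            rw [← Real.exp_nat_mul, Real.rpow_def_of_pos hN0]
            congr 1
            have hpN : p * (N:ℝ) = c * Real.log N := by
              rw [hpdef]; field_simp
            rw [hadef]
            linear_combination (-((1-ε))*(1-c*δ)*(w:ℝ)) * hpN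
          rw [← heq]; exact hmono
        have hchoose : (N.choose w : ℝ) ≤ (N:ℝ)^w * Real.exp 1 ^ w := by
          have hfac1 : (1:ℝ) ≤ (w.factorial : ℝ) := by exact_mod_cast w.factorial_pos
          have hexp1 : (1:ℝ) ≤ Real.exp 1 ^ w :=
            one_le_pow₀ (Real.one_le_exp (by norm_num))
          calc (N.choose w:ℝ) ≤ (N:ℝ)^w / w.factorial := Nat.choose_le_pow_div w N
            _ ≤ (N:ℝ)^w := div_le_self (by positivity) hfac1
            _ ≤ (N:ℝ)^w * Real.exp 1 ^ w := le_mul_of_one_le_right (by positivity) hexp1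
        have e1 : (N:ℝ)^w * (N:ℝ)^(-(a*(w:ℝ))) = (N:ℝ)^(((1:ℝ)-a)*(w:ℝ)) := by
          rw [← Real.rpow_natCast (N:ℝ) w, ← Real.rpow_add hN0]
          congr 1; ring
        have e2 : (N:ℝ)^(((1:ℝ)-a)*(w:ℝ)) = ((N:ℝ)^((1:ℝ)-a))^w := by
          rw [Real.rpow_mul hN0.le, Real.rpow_natCast]
        calc (N.choose w : ℝ) * F w
            ≤ ((N:ℝ)^w * Real.exp 1 ^ w) * (ε^w * (N:ℝ)^(-(a*(w:ℝ)))) := by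
              apply mul_le_mul hchoose
                (mul_le_mul_of_nonneg_left hcolvN (pow_nonneg hε0.le w))
                (hF w) (by positivity)
          _ = (Real.exp 1 * ε * (N:ℝ)^((1:ℝ)-a))^w := by
              calc ((N:ℝ)^w * Real.exp 1 ^ w) * (ε^w * (N:ℝ)^(-(a*(w:ℝ))))
                  = ((N:ℝ)^w * (N:ℝ)^(-(a*(w:ℝ)))) * (Real.exp 1 ^ w * ε^w) := by ring
                _ = ((N:ℝ)^((1:ℝ)-a))^w * (Real.exp 1 ^ w * ε^w) := by rw [e1, e2]
                _ = (Real.exp 1 * ε * (N:ℝ)^((1:ℝ)-a))^w := by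
                    rw [mul_pow, mul_pow]; ring
          _ ≤ Real.exp 1 * ε * (N:ℝ)^((1:ℝ)-a) := by
              have hXw := pow_le_pow_of_le_one hX0 hεN (show 1 ≤ w from hw1)
              simpa using hXw
      have hsum := Finset.sum_le_card_nsmul _ _ _ hterm
      have hL0 : (0:ℝ) ≤ δ * N / Real.log N := by positivity
      have hcardle : ((((Finset.Icc 1 N).filter
            (fun w => ((w:ℕ):ℝ) < δ * N / Real.log N)).card : ℕ) : ℝ)
          ≤ δ * N / Real.log N := by
        have hsub : ((Finset.Icc 1 N).filter (fun w => ((w:ℕ):ℝ) < δ * N / Real.log N))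
            ⊆ Finset.Icc 1 (Nat.floor (δ * N / Real.log N)) := by
          intro w hw
          obtain ⟨hwIcc, hwL⟩ := Finset.mem_filter.1 hw
          obtain ⟨hw1, _⟩ := Finset.mem_Icc.1 hwIcc
          exact Finset.mem_Icc.2 ⟨hw1, Nat.le_floor hwL.le⟩
        have h1 := Finset.card_le_card hsub
        have h2 : (Finset.Icc 1 (Nat.floor (δ * N / Real.log N))).card
            = Nat.floor (δ * N / Real.log N) := by
          rw [Nat.card_Icc]; omega
        have h3 : ((Nat.floor (δ * N / Real.log N) : ℕ) : ℝ) ≤ δ * N / Real.log N :=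
          Nat.floor_le hL0
        have h4 : (((((Finset.Icc 1 N).filter
            (fun w => ((w:ℕ):ℝ) < δ * N / Real.log N)).card : ℕ)) : ℝ)
            ≤ ((Nat.floor (δ * N / Real.log N) : ℕ) : ℝ) := by
          exact_mod_cast h2 ▸ h1
        linarith
      have hNN : (N:ℝ) * (N:ℝ)^((1:ℝ)-a) = (N:ℝ)^((2:ℝ)-a) := by
        rw [show ((2:ℝ)-a) = 1 + (1-a) by ring, Real.rpow_add hN0, Real.rpow_one]
      calc ∑ w ∈ (Finset.Icc 1 N).filter (fun w => ((w:ℕ):ℝ) < δ * N / Real.log N),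
            (N.choose w : ℝ) * F w
          ≤ (((Finset.Icc 1 N).filter
              (fun w => ((w:ℕ):ℝ) < δ * N / Real.log N)).card : ℕ)
              • (Real.exp 1 * ε * (N:ℝ)^((1:ℝ)-a)) := hsum
        _ = ((((Finset.Icc 1 N).filter
              (fun w => ((w:ℕ):ℝ) < δ * N / Real.log N)).card : ℕ) : ℝ)
              * (Real.exp 1 * ε * (N:ℝ)^((1:ℝ)-a)) := nsmul_eq_mul _ _
        _ ≤ (δ * N / Real.log N) * (Real.exp 1 * ε * (N:ℝ)^((1:ℝ)-a)) :=
            mul_le_mul_of_nonneg_right hcardle hX0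
        _ = δ * Real.exp 1 * ε * (N:ℝ)^((2:ℝ)-a) / Real.log N := by
            rw [← hNN]; field_simp
    have hlarge : ∑ w ∈ (Finset.Icc 1 N).filter
          (fun w => ¬(((w:ℕ):ℝ) < δ * N / Real.log N)),
        (N.choose w : ℝ) * F w ≤ (1 - Aδ/2) ^ N := by
      have hterm : ∀ w ∈ (Finset.Icc 1 N).filter
            (fun w => ¬(((w:ℕ):ℝ) < δ * N / Real.log N)),
          (N.choose w : ℝ) * F w ≤ (N.choose w : ℝ) * (ε^w * (1-Aδ)^N) := by
        intro w hw
        obtain ⟨hwIcc, hwL⟩ := Finset.mem_filter.1 hw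
        push_neg at hwL
        have hpw : c * δ ≤ p * (w:ℝ) := by
          have h := mul_le_mul_of_nonneg_left hwL hp0.le
          have hpL : p * (δ*(N:ℝ)/Real.log N) = c*δ := by
            rw [hpdef]; field_simp
          linarith
        have hcexp : (1-2*p)^w ≤ Real.exp (-(2*c*δ)) := by
          calc (1-2*p)^w ≤ (Real.exp (-(2*p)))^w :=
                pow_le_pow_left₀ h2p
                  (by have := Real.add_one_le_exp (-(2*p)); linarith) w
            _ = Real.exp ((w:ℝ) * (-(2*p))) := (Real.exp_nat_mul _ w).symm
            _ ≤ Real.exp (-(2*c*δ)) := by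
                apply Real.exp_le_exp.2
                nlinarith [hpw]
        have hcolvA : (1+ε)/2 + (1-ε)/2*(1-2*p)^w ≤ 1 - Aδ := by
          rw [hAdef]
          nlinarith [mul_le_mul_of_nonneg_left hcexp
            (show (0:ℝ) ≤ (1-ε)/2 by linarith)]
        have hthis : ((1+ε)/2 + (1-ε)/2*(1-2*p)^w)^N ≤ (1-Aδ)^N :=
          pow_le_pow_left₀ (hcolv0 w) hcolvA N
        apply mul_le_mul_of_nonneg_left _ (Nat.cast_nonneg _)
        exact mul_le_mul_of_nonneg_left hthis (pow_nonneg hε0.le w)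
      have hstep := Finset.sum_le_sum hterm
      have hext : ∑ w ∈ (Finset.Icc 1 N).filter
            (fun w => ¬(((w:ℕ):ℝ) < δ * N / Real.log N)),
          (N.choose w : ℝ) * (ε^w * (1-Aδ)^N)
          ≤ ∑ w ∈ Finset.range (N+1), (N.choose w : ℝ) * (ε^w * (1-Aδ)^N) := by
        apply Finset.sum_le_sum_of_subset_of_nonneg
        · intro w hw
          obtain ⟨hwIcc, _⟩ := Finset.mem_filter.1 hw
          obtain ⟨_, hwN⟩ := Finset.mem_Icc.1 hwIcc
          exact Finset.mem_range.2 (by omega)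
        · intro w _ _
          have h1 : (0:ℝ) ≤ (1-Aδ)^N := pow_nonneg (by linarith) N
          have h2 : (0:ℝ) ≤ ε^w := pow_nonneg hε0.le w
          positivity
      have hbinom : ∑ w ∈ Finset.range (N+1), (N.choose w : ℝ) * (ε^w * (1-Aδ)^N)
          = ((ε+1)*(1-Aδ))^N := by
        rw [mul_pow, add_pow, Finset.sum_mul]
        apply Finset.sum_congr rfl
        intro k _
        simp only [one_pow, mul_one]
        ring
      have hfinal : ((ε+1)*(1-Aδ))^N ≤ (1 - Aδ/2)^N := by
        apply pow_le_pow_left₀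
        · nlinarith
        · nlinarith
      calc ∑ w ∈ (Finset.Icc 1 N).filter
            (fun w => ¬(((w:ℕ):ℝ) < δ * N / Real.log N)), (N.choose w : ℝ) * F w
          ≤ ∑ w ∈ (Finset.Icc 1 N).filter
            (fun w => ¬(((w:ℕ):ℝ) < δ * N / Real.log N)),
              (N.choose w : ℝ) * (ε^w * (1-Aδ)^N) := hstep
        _ ≤ ∑ w ∈ Finset.range (N+1), (N.choose w : ℝ) * (ε^w * (1-Aδ)^N) := hext
        _ = ((ε+1)*(1-Aδ))^N := hbinom
        _ ≤ (1 - Aδ/2)^N := hfinal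
    rw [hBdef, ← hsplit2]
    linarith [hsmall, hlarge]
  -- Markov
  set good : Finset (Matrix (Fin N) (Fin N) (ZMod 2)) :=
    univ.filter (fun A =>
      (((univ : Finset (Fin N × Fin N)).filter (fun ij => A ij.1 ij.2 ≠ 0)).card : ℝ)
        ≤ 2 * c * N * Real.log N) with hgooddef
  have hgood : (1:ℝ)/2 ≤ ∑ A ∈ good, W A := by
    have hK : 2 * c * (N:ℝ) * Real.log N = 2 * (p * (N:ℝ)^2) := by
      rw [hpdef]
      field_simp
    have hK0 : 0 < 2 * c * (N:ℝ) * Real.log N := by positivity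
    have hOnes := onesE_mat N p
    have hsplit := Finset.sum_filter_add_sum_filter_not
      (univ : Finset (Matrix (Fin N) (Fin N) (ZMod 2)))
      (fun A =>
        (((univ : Finset (Fin N × Fin N)).filter (fun ij => A ij.1 ij.2 ≠ 0)).card : ℝ)
          ≤ 2 * c * N * Real.log N) W
    have hbad : ∑ A ∈ univ.filter (fun A : Matrix (Fin N) (Fin N) (ZMod 2) =>
        ¬ ((((univ : Finset (Fin N × Fin N)).filter (fun ij => A ij.1 ij.2 ≠ 0)).card : ℝ)
          ≤ 2 * c * N * Real.log N)), W A ≤ 1/2 := by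
      set bad := univ.filter (fun A : Matrix (Fin N) (Fin N) (ZMod 2) =>
        ¬ ((((univ : Finset (Fin N × Fin N)).filter (fun ij => A ij.1 ij.2 ≠ 0)).card : ℝ)
          ≤ 2 * c * N * Real.log N)) with hbaddef
      have h1 : (∑ A ∈ bad, W A) * (2 * c * N * Real.log N)
          ≤ ∑ A ∈ bad, W A *
            (((univ : Finset (Fin N × Fin N)).filter (fun ij => A ij.1 ij.2 ≠ 0)).card : ℝ) := by
        rw [Finset.sum_mul]
        apply Finset.sum_le_sum
        intro A hA
        have := (Finset.mem_filter.1 hA).2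
        push_neg at this
        exact mul_le_mul_of_nonneg_left this.le (hW0 A)
      have h2 : ∑ A ∈ bad, W A *
            (((univ : Finset (Fin N × Fin N)).filter (fun ij => A ij.1 ij.2 ≠ 0)).card : ℝ)
          ≤ p * (N:ℝ)^2 := by
        rw [← hOnes]
        apply Finset.sum_le_sum_of_subset_of_nonneg (Finset.subset_univ _)
        intro A _ _
        exact mul_nonneg (hW0 A) (Nat.cast_nonneg _)
      have h3 : (∑ A ∈ bad, W A) * (2 * c * N * Real.log N) ≤ p * (N:ℝ)^2 := h1.trans h2
      nlinarith [h3, hK0, hK]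
    have : ∑ A ∈ good, W A + ∑ A ∈ univ.filter (fun A : Matrix (Fin N) (Fin N) (ZMod 2) =>
        ¬ ((((univ : Finset (Fin N × Fin N)).filter (fun ij => A ij.1 ij.2 ≠ 0)).card : ℝ)
          ≤ 2 * c * N * Real.log N)), W A = 1 := by
      rw [hgooddef, hsplit, hWsum]
    linarith
  -- extraction
  have hfnn : ∀ A : Matrix (Fin N) (Fin N) (ZMod 2), 0 ≤ eP A := by
    intro A
    simp only [hePdef]
    rw [erasureProb_def]
    apply Finset.sum_nonneg
    intro S _
    split
    · exact mul_nonneg (pow_nonneg hε0.le _) (pow_nonneg (by linarith) _)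
    · exact le_refl 0
  by_contra hcon
  push_neg at hcon
  have hstrict : ∀ A ∈ good, 2 * B < eP A := by
    intro A hA
    exact hcon A ((Finset.mem_filter.1 hA).2)
  have hA0 : ∃ A₀ ∈ good, 0 < W A₀ := by
    by_contra h
    push_neg at h
    have : ∑ A ∈ good, W A ≤ 0 := Finset.sum_nonpos h
    linarith
  obtain ⟨A₀, hA₀g, hA₀W⟩ := hA0
  have hlt : ∑ A ∈ good, W A * (2*B) < ∑ A ∈ good, W A * eP A := by
    apply Finset.sum_lt_sum
    · intro A hA
      exact mul_le_mul_of_nonneg_left (hstrict A hA).le (hW0 A)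
    · exact ⟨A₀, hA₀g, mul_lt_mul_of_pos_left (hstrict A₀ hA₀g) hA₀W⟩
  have hB_le : B ≤ ∑ A ∈ good, W A * (2*B) := by
    have h : ∑ A ∈ good, W A * (2*B) = (∑ A ∈ good, W A) * (2*B) := by
      rw [Finset.sum_mul]
    rw [h]
    nlinarith [hgood, hB0]
  have hsub : ∑ A ∈ good, W A * eP A
      ≤ ∑ A : Matrix (Fin N) (Fin N) (ZMod 2), W A * eP A := by
    apply Finset.sum_le_sum_of_subset_of_nonneg (Finset.subset_univ _)
    intro A _ _
    exact mul_nonneg (hW0 A) (hfnn A)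
  linarith
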